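/- Let N ≥ 1 and let ζ_1, …, ζ_N ∈ ℂ satisfy |ζ_k| = 1 for all k. Let F be the N×N matrix with entries F_{kj} = ζ_k^j for 1 ≤ k ≤ N and 0 ≤ j ≤ N−1, and define σ_min(F) := inf over unit vectors c ∈ ℂ^N of ‖Fc‖₂. Then σ_min(F) ≤ √N, and σ_min(F) = √N holds if and only if the ζ_k are pairwise distinct and ζ_k^N is independent of k (equivalently, {ζ_1,…,ζ_N} is exactly the set of N-th roots of some unimodular number a, i.e. a rotated copy of the N-th roots of unity). -/

import Mathlib

open scoped Matrix

/-- The least singular value (on the domain dimension) of a rectangular complex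
matrix: `σ_min(F) = inf_{‖c‖₂ = 1} ‖F c‖₂`. -/
noncomputable def sigmaMin {m n : ℕ} (L : Matrix (Fin m) (Fin n) ℂ) : ℝ :=
  ⨅ x : {x : EuclideanSpace ℂ (Fin n) // ‖x‖ = 1}, ‖Matrix.toEuclideanLin L x.1‖


private lemma euclid_normsq {N : ℕ} (x : EuclideanSpace ℂ (Fin N)) :
    ‖x‖ ^ 2 = ∑ i, Complex.normSq (x i) := by
  rw [EuclideanSpace.norm_eq, Real.sq_sqrt (by positivity)]
  simp [Complex.sq_norm]

private lemma toEuc_symm {N : ℕ} (F : Matrix (Fin N) (Fin N) ℂ) (g : Fin N → ℂ) :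
    Matrix.toEuclideanLin F ((WithLp.equiv 2 (Fin N → ℂ)).symm g)
      = (WithLp.equiv 2 (Fin N → ℂ)).symm (F.mulVec g) := by
  rw [Matrix.toEuclideanLin_apply]
  simp

private lemma toEuc_normsq {N : ℕ} (F : Matrix (Fin N) (Fin N) ℂ) (g : Fin N → ℂ) :
    ‖Matrix.toEuclideanLin F ((WithLp.equiv 2 (Fin N → ℂ)).symm g)‖ ^ 2
      = ∑ k, Complex.normSq (F.mulVec g k) := by
  rw [toEuc_symm, euclid_normsq]
  simp

private lemma symm_normsq {N : ℕ} (g : Fin N → ℂ) :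
    ‖(WithLp.equiv 2 (Fin N → ℂ)).symm g‖ ^ 2 = ∑ i, Complex.normSq (g i) := by
  rw [euclid_normsq]
  simp

private lemma comm_lemma {N : ℕ} (F : Matrix (Fin N) (Fin N) ℂ) (hn : (N:ℂ) ≠ 0)
    (h : Fᴴ * F = (N:ℂ) • 1) : F * Fᴴ = (N:ℂ) • 1 := by
  have h1 : ((N:ℂ)⁻¹ • Fᴴ) * F = 1 := by
    rw [Matrix.smul_mul, h, smul_smul, inv_mul_cancel₀ hn, one_smul]
  have h2 : F * ((N:ℂ)⁻¹ • Fᴴ) = 1 := mul_eq_one_comm.mpr h1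
  calc F * Fᴴ = (N:ℂ) • (F * ((N:ℂ)⁻¹ • Fᴴ)) := by
        rw [Matrix.mul_smul, smul_smul, mul_inv_cancel₀ hn, one_smul]
  _ = (N:ℂ) • 1 := by rw [h2]

private lemma normsq_from_gram {N : ℕ} (F : Matrix (Fin N) (Fin N) ℂ)
    (h : Fᴴ * F = (N:ℂ) • 1) (x : EuclideanSpace ℂ (Fin N)) :
    ‖Matrix.toEuclideanLin F x‖ ^ 2 = N * ‖x‖ ^ 2 := by
  have hcomp : Matrix.toEuclideanLin Fᴴ (Matrix.toEuclideanLin F x)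
      = Matrix.toEuclideanLin (Fᴴ * F) x := by
    simp only [Matrix.toEuclideanLin_apply]
    simp [Matrix.mulVec_mulVec]
  have key : (inner ℂ (Matrix.toEuclideanLin F x) (Matrix.toEuclideanLin F x) : ℂ)
      = inner ℂ x (Matrix.toEuclideanLin (Fᴴ * F) x) := by
    rw [← hcomp, Matrix.toEuclideanLin_conjTranspose_eq_adjoint,
      LinearMap.adjoint_inner_right]
  have hone : Matrix.toEuclideanLin (1 : Matrix (Fin N) (Fin N) ℂ) x = x := by
    simp only [Matrix.toEuclideanLin_apply, Matrix.one_mulVec]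
  have h2 : Matrix.toEuclideanLin (Fᴴ * F) x = (N:ℂ) • x := by
    rw [h, map_smul, LinearMap.smul_apply, hone]
  rw [h2, inner_smul_right, inner_self_eq_norm_sq_to_K, inner_self_eq_norm_sq_to_K] at key
  have key3 : ((‖Matrix.toEuclideanLin F x‖ ^ 2 : ℝ) : ℂ) = ((N * ‖x‖ ^ 2 : ℝ) : ℂ) := by
    push_cast
    exact key
  exact_mod_cast key3

private lemma gram_of_powersums {N : ℕ} (ζ : Fin N → ℂ) (hζ : ∀ k, ‖ζ k‖ = 1)
    (F : Matrix (Fin N) (Fin N) ℂ) (hF : ∀ k j, F k j = ζ k ^ (j : ℕ))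
    (hS : ∀ r : ℕ, 0 < r → r < N → ∑ k, ζ k ^ r = 0) :
    Fᴴ * F = (N:ℂ) • 1 := by
  have hu : ∀ k, star (ζ k) * ζ k = 1 := by
    intro k
    rw [mul_comm]
    show ζ k * (starRingEnd ℂ) (ζ k) = 1
    rw [Complex.mul_conj, Complex.normSq_eq_norm_sq, hζ]
    norm_num
  ext i j
  rw [Matrix.mul_apply]
  simp only [Matrix.conjTranspose_apply, hF, Matrix.smul_apply, Matrix.one_apply,
    smul_eq_mul]
  rcases lt_trichotomy (i:ℕ) (j:ℕ) with hij|hij|hij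
  · have hne : i ≠ j := fun h => by simp [h] at hij
    have hterm : ∀ k : Fin N, star (ζ k ^ (i:ℕ)) * ζ k ^ (j:ℕ) = ζ k ^ ((j:ℕ) - i) := by
      intro k
      have hj : ζ k ^ (j:ℕ) = ζ k ^ (i:ℕ) * ζ k ^ ((j:ℕ) - i) := by
        rw [← pow_add]; congr 1; omega
      rw [hj, ← mul_assoc, star_pow, ← mul_pow, hu, one_pow, one_mul]
    rw [Finset.sum_congr rfl (fun k _ => hterm k), hS _ (by omega) (by omega), if_neg hne,
      mul_zero]
  · have he : i = j := Fin.ext hij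
    have hterm : ∀ k : Fin N, star (ζ k ^ (i:ℕ)) * ζ k ^ (j:ℕ) = 1 := by
      intro k
      rw [← he, star_pow, ← mul_pow, hu, one_pow]
    rw [Finset.sum_congr rfl (fun k _ => hterm k), if_pos he]
    simp
  · have hne : i ≠ j := fun h => by simp [h] at hij
    have hterm : ∀ k : Fin N, star (ζ k ^ (i:ℕ)) * ζ k ^ (j:ℕ)
        = star (ζ k ^ ((i:ℕ) - j)) := by
      intro k
      have hi : ζ k ^ (i:ℕ) = ζ k ^ ((i:ℕ) - j) * ζ k ^ (j:ℕ) := by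
        rw [← pow_add]; congr 1; omega
      rw [hi, star_mul', mul_assoc, star_pow (ζ k) (j:ℕ), ← mul_pow, hu, one_pow, mul_one]
    rw [Finset.sum_congr rfl (fun k _ => hterm k)]
    have hstar : ∑ k : Fin N, star (ζ k ^ ((i:ℕ) - j))
        = star (∑ k : Fin N, ζ k ^ ((i:ℕ) - j)) := by rw [star_sum]
    rw [hstar, hS _ (by omega) (by omega), if_neg hne, mul_zero, star_zero]

private lemma pairwise_of_gram {N : ℕ} (ζ : Fin N → ℂ) (hζ : ∀ k, ‖ζ k‖ = 1)
    (F : Matrix (Fin N) (Fin N) ℂ) (hF : ∀ k j, F k j = ζ k ^ (j : ℕ))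
    (hFF : F * Fᴴ = (N:ℂ) • 1) (k l : Fin N) (hkl : k ≠ l) :
    ζ k ≠ ζ l ∧ ζ k ^ N = ζ l ^ N := by
  have hu : ∀ m, star (ζ m) * ζ m = 1 := by
    intro m
    rw [mul_comm]
    show ζ m * (starRingEnd ℂ) (ζ m) = 1
    rw [Complex.mul_conj, Complex.normSq_eq_norm_sq, hζ]
    norm_num
  set w : ℂ := ζ k * star (ζ l) with hw
  have h0 : ∑ j ∈ Finset.range N, w ^ j = 0 := by
    have he := congrFun (congrFun hFF k) l
    rw [Matrix.mul_apply] at he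
    simp only [Matrix.conjTranspose_apply, hF, Matrix.smul_apply, Matrix.one_apply,
      if_neg hkl, smul_eq_mul, mul_zero] at he
    rw [← he, ← Fin.sum_univ_eq_sum_range (fun n => w ^ n)]
    refine Finset.sum_congr rfl fun j _ => ?_
    rw [hw, mul_pow, ← star_pow]
  have hw1 : w ≠ 1 := by
    intro h
    rw [h] at h0
    simp only [one_pow, Finset.sum_const, Finset.card_range, nsmul_eq_mul, mul_one] at h0
    have hN0 : N = 0 := by exact_mod_cast h0
    have hk := k.isLt
    omega
  have hwN : w ^ N = 1 := by
    have hg := geom_sum_mul w N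
    rw [h0, zero_mul] at hg
    have hg2 := hg.symm
    rwa [sub_eq_zero] at hg2
  constructor
  · intro h
    apply hw1
    rw [hw, h, mul_comm]
    exact hu l
  · calc ζ k ^ N = ζ k ^ N * ((star (ζ l) * ζ l) ^ N) := by rw [hu, one_pow, mul_one]
    _ = w ^ N * ζ l ^ N := by rw [hw, mul_pow, mul_pow]; ring
    _ = ζ l ^ N := by rw [hwN, one_mul]

private lemma gram_of_roots {N : ℕ} (ζ : Fin N → ℂ) (hζ : ∀ k, ‖ζ k‖ = 1)
    (F : Matrix (Fin N) (Fin N) ℂ) (hF : ∀ k j, F k j = ζ k ^ (j : ℕ))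
    (hinj : Function.Injective ζ) (a : ℂ) (ha : ‖a‖ = 1)
    (haz : ∀ k, ζ k ^ N = a) : F * Fᴴ = (N:ℂ) • 1 := by
  have hu : ∀ m, star (ζ m) * ζ m = 1 := by
    intro m
    rw [mul_comm]
    show ζ m * (starRingEnd ℂ) (ζ m) = 1
    rw [Complex.mul_conj, Complex.normSq_eq_norm_sq, hζ]
    norm_num
  ext k l
  rw [Matrix.mul_apply]
  simp only [Matrix.conjTranspose_apply, hF, Matrix.smul_apply, Matrix.one_apply, smul_eq_mul]
  have hsum : ∑ j : Fin N, ζ k ^ (j:ℕ) * star (ζ l ^ (j:ℕ))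
      = ∑ j ∈ Finset.range N, (ζ k * star (ζ l)) ^ j := by
    rw [← Fin.sum_univ_eq_sum_range (fun n => (ζ k * star (ζ l)) ^ n)]
    refine Finset.sum_congr rfl fun j _ => ?_
    rw [mul_pow, ← star_pow]
  rw [hsum]
  by_cases hkl : k = l
  · subst hkl
    rw [if_pos rfl, mul_one]
    have h1 : ζ k * star (ζ k) = 1 := by rw [mul_comm]; exact hu k
    rw [h1]
    simp
  · rw [if_neg hkl, mul_zero]
    set w : ℂ := ζ k * star (ζ l) with hw
    have hw1 : w ≠ 1 := by
      intro h
      apply hkl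
      apply hinj
      have h2 : ζ k * star (ζ l) = ζ l * star (ζ l) := by
        rw [← hw, h, mul_comm]
        exact (hu l).symm
      have hs : star (ζ l) ≠ 0 := by
        simp only [star_ne_zero]
        intro h3
        simpa [h3] using hζ l
      exact mul_right_cancel₀ hs h2
    have hwN : w ^ N = 1 := by
      rw [hw, mul_pow, ← star_pow, haz, haz]
      show a * (starRingEnd ℂ) a = 1
      rw [Complex.mul_conj, Complex.normSq_eq_norm_sq, ha]
      norm_num
    rw [geom_sum_eq hw1, hwN, sub_self, zero_div]

theorem stmt6 (N : ℕ) (hN : 1 ≤ N)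
    (ζ : Fin N → ℂ) (hζ : ∀ k, ‖ζ k‖ = 1)
    (F : Matrix (Fin N) (Fin N) ℂ)
    (hF : ∀ k j, F k j = ζ k ^ (j : ℕ)) :
    sigmaMin F ≤ Real.sqrt N ∧
    (sigmaMin F = Real.sqrt N ↔
      Function.Injective ζ ∧ ∃ a : ℂ, ‖a‖ = 1 ∧ ∀ k, ζ k ^ N = a) := by
  have hNR : (0:ℝ) < N := by exact_mod_cast hN
  have hNC : (N:ℂ) ≠ 0 := by
    simp only [ne_eq, Nat.cast_eq_zero]
    omega
  set i0 : Fin N := ⟨0, hN⟩ with hi0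
  -- the "column" unit vector e_{i0} and its image
  have hsingle_norm : ‖(EuclideanSpace.single i0 (1:ℂ))‖ = 1 := by simp
  have hFnorm_single : ‖Matrix.toEuclideanLin F (EuclideanSpace.single i0 (1:ℂ))‖
      = Real.sqrt N := by
    have hg : (EuclideanSpace.single i0 (1:ℂ))
        = (WithLp.equiv 2 (Fin N → ℂ)).symm (Pi.single i0 1) := rfl
    have h2 : ‖Matrix.toEuclideanLin F (EuclideanSpace.single i0 (1:ℂ))‖ ^ 2
        = ∑ k, Complex.normSq (F.mulVec (Pi.single i0 1) k) := by
      rw [hg, toEuc_normsq]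
    have h3 : ∀ k, F.mulVec (Pi.single i0 (1:ℂ)) k = 1 := by
      intro k
      simp [Matrix.mulVec_single, hF, hi0]
    rw [Finset.sum_congr rfl (fun k _ => by rw [h3 k])] at h2
    simp only [Complex.normSq_one, Finset.sum_const, Finset.card_univ, Fintype.card_fin,
      nsmul_eq_mul, mul_one] at h2
    rw [← Real.sqrt_sq (norm_nonneg _), h2]
  haveI hne : Nonempty {x : EuclideanSpace ℂ (Fin N) // ‖x‖ = 1} :=
    ⟨⟨EuclideanSpace.single i0 1, hsingle_norm⟩⟩
  have hbdd : BddBelow (Set.range fun x : {x : EuclideanSpace ℂ (Fin N) // ‖x‖ = 1} =>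
      ‖Matrix.toEuclideanLin F x.1‖) := by
    refine ⟨0, ?_⟩
    rintro y ⟨x, rfl⟩
    exact norm_nonneg _
  have hub : sigmaMin F ≤ Real.sqrt N := by
    have := ciInf_le hbdd (⟨EuclideanSpace.single i0 1, hsingle_norm⟩ :
      {x : EuclideanSpace ℂ (Fin N) // ‖x‖ = 1})
    rwa [hFnorm_single] at this
  refine ⟨hub, ?_⟩
  constructor
  · -- forward direction
    intro h
    -- lower bound for all unit vectors
    have hlow1 : ∀ x : EuclideanSpace ℂ (Fin N), ‖x‖ = 1 →
        Real.sqrt N ≤ ‖Matrix.toEuclideanLin F x‖ := by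
      intro x hx
      have h0 : sigmaMin F ≤ ‖Matrix.toEuclideanLin F x‖ :=
        ciInf_le hbdd (⟨x, hx⟩ : {x : EuclideanSpace ℂ (Fin N) // ‖x‖ = 1})
      rwa [h] at h0
    -- scaled lower bound
    have hlow : ∀ x : EuclideanSpace ℂ (Fin N),
        (N:ℝ) * ‖x‖ ^ 2 ≤ ‖Matrix.toEuclideanLin F x‖ ^ 2 := by
      intro x
      by_cases hx0 : x = 0
      · simp [hx0]
      · have hxn : ‖x‖ ≠ 0 := norm_ne_zero_iff.mpr hx0
        have hxp : (0:ℝ) < ‖x‖ := (norm_nonneg x).lt_of_ne' hxn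
        set c : ℂ := ((‖x‖⁻¹ : ℝ) : ℂ) with hc
        have hcn : ‖c‖ = ‖x‖⁻¹ := by
          rw [hc, Complex.norm_real]
          exact abs_of_nonneg (by positivity)
        have hu : ‖c • x‖ = 1 := by
          rw [norm_smul, hcn, inv_mul_cancel₀ hxn]
        have h1 := hlow1 _ hu
        rw [map_smul, norm_smul, hcn] at h1
        have h2 : Real.sqrt N * ‖x‖ ≤ ‖Matrix.toEuclideanLin F x‖ := by
          have := mul_le_mul_of_nonneg_right h1 hxp.le
          rw [mul_assoc, mul_comm, ← mul_assoc] at this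
          calc Real.sqrt N * ‖x‖ = ‖x‖ * Real.sqrt N := by ring
          _ ≤ ‖x‖ * ‖x‖⁻¹ * ‖Matrix.toEuclideanLin F x‖ := by
                rw [mul_inv_cancel₀ hxn, one_mul]
                calc ‖x‖ * Real.sqrt N ≤ ‖x‖ * (‖x‖⁻¹ * ‖Matrix.toEuclideanLin F x‖) :=
                      mul_le_mul_of_nonneg_left h1 hxp.le
                _ = ‖Matrix.toEuclideanLin F x‖ := by
                      rw [← mul_assoc, mul_inv_cancel₀ hxn, one_mul]
          _ = ‖Matrix.toEuclideanLin F x‖ := by rw [mul_inv_cancel₀ hxn, one_mul]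
        have h4 : (Real.sqrt N * ‖x‖) ^ 2 ≤ ‖Matrix.toEuclideanLin F x‖ ^ 2 := by
          have hnn : (0:ℝ) ≤ Real.sqrt N * ‖x‖ := by positivity
          nlinarith
        calc (N:ℝ) * ‖x‖ ^ 2 = (Real.sqrt N * ‖x‖) ^ 2 := by
              rw [mul_pow, Real.sq_sqrt hNR.le]
        _ ≤ ‖Matrix.toEuclideanLin F x‖ ^ 2 := h4
    -- power sums vanish
    have hS : ∀ r : ℕ, 0 < r → r < N → ∑ k, ζ k ^ r = 0 := by
      intro r hr1 hr2
      set S : ℂ := ∑ k, ζ k ^ r with hSdef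
      set t : ℂ := -(starRingEnd ℂ) S with ht
      set ir : Fin N := ⟨r, hr2⟩ with hir
      have hi0r : i0 ≠ ir := by
        intro hcon
        have := congrArg Fin.val hcon
        simp [hi0, hir] at this
        omega
      set g : Fin N → ℂ := fun i => if i = i0 then 1 else if i = ir then t else 0 with hgdef
      have hgnsq : ∑ i, Complex.normSq (g i) = 1 + Complex.normSq t := by
        have hpt : ∀ i, Complex.normSq (g i)
            = (if i = i0 then (1:ℝ) else 0) + (if i = ir then Complex.normSq t else 0) := by
          intro i
          by_cases h1 : i = i0
          · subst h1
            simp [hgdef, hi0r]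
          · by_cases h2 : i = ir
            · subst h2
              simp [hgdef, h1]
            · simp [hgdef, h1, h2]
        rw [Finset.sum_congr rfl (fun i _ => hpt i), Finset.sum_add_distrib]
        simp [Finset.sum_ite_eq']
      have hmv : ∀ k, F.mulVec g k = 1 + ζ k ^ r * t := by
        intro k
        rw [Matrix.mulVec, dotProduct]
        have hpt : ∀ j, F k j * g j
            = (if j = i0 then F k i0 else 0) + (if j = ir then F k ir * t else 0) := by
          intro j
          by_cases h1 : j = i0
          · subst h1
            rw [if_pos rfl, if_neg hi0r]
            simp [hgdef]
          · by_cases h2 : j = ir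
            · subst h2
              rw [if_neg h1, if_pos rfl]
              simp [hgdef, h1]
            · simp [hgdef, h1, h2]
        rw [Finset.sum_congr rfl (fun j _ => hpt j), Finset.sum_add_distrib]
        simp only [Finset.sum_ite_eq', Finset.mem_univ, if_pos]
        rw [hF, hF]
        simp [hi0, hir]
      have himg : ∑ k, Complex.normSq (F.mulVec g k)
          = N * (1 + Complex.normSq t) + 2 * ((starRingEnd ℂ) S * (starRingEnd ℂ) t).re := by
        have hpt : ∀ k, Complex.normSq (F.mulVec g k)
            = (1 + Complex.normSq t) + 2 * ((starRingEnd ℂ) (ζ k ^ r) * (starRingEnd ℂ) t).re := by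
          intro k
          rw [hmv k, Complex.normSq_add, Complex.normSq_one, Complex.normSq_mul]
          have habs : Complex.normSq (ζ k ^ r) = 1 := by
            rw [map_pow, Complex.normSq_eq_norm_sq, hζ]
            norm_num
          rw [habs, one_mul, one_mul, map_mul]
        rw [Finset.sum_congr rfl (fun k _ => hpt k), Finset.sum_add_distrib]
        simp only [Finset.sum_const, Finset.card_univ, Fintype.card_fin, nsmul_eq_mul]
        congr 1
        rw [← Finset.mul_sum, ← Complex.re_sum, ← Finset.sum_mul, ← map_sum, ← hSdef]
      have hx := hlow ((WithLp.equiv 2 (Fin N → ℂ)).symm g)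
      rw [toEuc_normsq, symm_normsq, hgnsq, himg] at hx
      have hre : ((starRingEnd ℂ) S * (starRingEnd ℂ) t).re = -Complex.normSq S := by
        have hh : (starRingEnd ℂ) S * (starRingEnd ℂ) t = -(S * (starRingEnd ℂ) S) := by
          rw [ht, map_neg, Complex.conj_conj]
          ring
        rw [hh, Complex.mul_conj]
        simp
      rw [hre] at hx
      have : Complex.normSq S ≤ 0 := by linarith
      exact Complex.normSq_eq_zero.mp (le_antisymm this (Complex.normSq_nonneg S))
    have hgram := gram_of_powersums ζ hζ F hF hS
    have hFF := comm_lemma F hNC hgram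
    have hpair := fun k l hkl => pairwise_of_gram ζ hζ F hF hFF k l hkl
    refine ⟨?_, ζ i0 ^ N, ?_, ?_⟩
    · intro k l hkla
      by_contra hkl
      exact (hpair k l hkl).1 hkla
    · rw [norm_pow, hζ, one_pow]
    · intro k
      by_cases hk : k = i0
      · rw [hk]
      · exact (hpair k i0 hk).2
  · -- backward direction
    rintro ⟨hinj, a, ha, haz⟩
    have hFF := gram_of_roots ζ hζ F hF hinj a ha haz
    have hgram : Fᴴ * F = (N:ℂ) • 1 := by
      have := comm_lemma Fᴴ hNC (by rwa [Matrix.conjTranspose_conjTranspose])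
      rwa [Matrix.conjTranspose_conjTranspose] at this
    have hconst : ∀ x : {x : EuclideanSpace ℂ (Fin N) // ‖x‖ = 1},
        ‖Matrix.toEuclideanLin F x.1‖ = Real.sqrt N := by
      rintro ⟨x, hx⟩
      have h2 := normsq_from_gram F hgram x
      rw [hx] at h2
      simp only [one_pow, mul_one] at h2
      rw [← Real.sqrt_sq (norm_nonneg _), h2]
    have hrw : sigmaMin F = ⨅ _x : {x : EuclideanSpace ℂ (Fin N) // ‖x‖ = 1}, Real.sqrt N := by
      unfold sigmaMin
      exact congrArg iInf (funext hconst)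
    rw [hrw, ciInf_const]
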